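/- For t > 0, the measure ν_t with density exp(−(u−1)²/(2tu))/√(2πtu) on (0,∞) equals the convolution γ_t * D_t μ_{1/t}, where γ_t is the gamma distribution with density exp(−u/(2t))/√(2πtu) on (0,∞) (shape 1/2, scale 2t) and D_t μ_{1/t} is the dilation by t of the inverse Gaussian measure μ_{1/t}, having density exp(−(u−1)²/(2tu))/√(2πtu³) on (0,∞). -/

import Mathlib

open Real MeasureTheory

/-- The inverse Gaussian density with both parameters equal to `s`, extended by `0`
outside `(0, ∞)`. -/
noncomputable def ρ (s u : ℝ) : ℝ :=
  if 0 < u then s * Real.exp (-(u - s) ^ 2 / (2 * u)) / Real.sqrt (2 * π * u ^ 3) else 0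

/-- The inverse Gaussian measure `μ_s = ρ_s(u) du`. -/
noncomputable def μ (s : ℝ) : Measure ℝ :=
  volume.withDensity fun u => ENNReal.ofReal (ρ s u)

/-- The measure `ν_t` whose moments are the Bessel polynomials `y_n(t)`. -/
noncomputable def ν (t : ℝ) : Measure ℝ :=
  volume.withDensity fun u =>
    ENNReal.ofReal
      (if 0 < u then Real.exp (-(u - 1) ^ 2 / (2 * t * u)) / Real.sqrt (2 * π * t * u) else 0)

/-- The gamma distribution with shape `1/2` and scale `2t`. -/
noncomputable def γmeas (t : ℝ) : Measure ℝ :=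
  volume.withDensity fun u =>
    ENNReal.ofReal (if 0 < u then Real.exp (-u / (2 * t)) / Real.sqrt (2 * π * t * u) else 0)

open Set
open scoped ENNReal NNReal

lemma measurable_rho (s : ℝ) : Measurable (ρ s) := by
  unfold ρ
  refine Measurable.ite measurableSet_Ioi ?_ measurable_const
  exact (measurable_const.mul (((((measurable_id.sub_const s).pow_const 2).neg).div
    (measurable_const.mul measurable_id)).exp)).div
    (Real.continuous_sqrt.measurable.comp (measurable_const.mul (measurable_id.pow_const 3)))

lemma measurable_fd (t : ℝ) :
    Measurable (fun x : ℝ => if 0 < x then Real.exp (-x / (2 * t)) / Real.sqrt (2 * π * t * x) else 0) :=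
  Measurable.ite measurableSet_Ioi
    (((measurable_id.neg.div_const (2*t)).exp).div
      (Real.continuous_sqrt.measurable.comp (measurable_const.mul measurable_id)))
    measurable_const

lemma fd_nonneg (t x : ℝ) :
    0 ≤ (if 0 < x then Real.exp (-x / (2 * t)) / Real.sqrt (2 * π * t * x) else 0) := by
  split_ifs <;> positivity

/-- change of variables for lintegrals, one-dimensional version -/
lemma lintegral_image_eq_lintegral_abs_deriv_mul {s : Set ℝ} {f f' : ℝ → ℝ}
    (hs : MeasurableSet s) (hf' : ∀ x ∈ s, HasDerivWithinAt f (f' x) s x)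
    (hf : Set.InjOn f s) (g : ℝ → ℝ≥0∞) :
    ∫⁻ x in f '' s, g x = ∫⁻ x in s, ENNReal.ofReal |f' x| * g (f x) := by
  simpa only [ContinuousLinearMap.det_toSpanSingleton] using
    lintegral_image_eq_lintegral_abs_det_fderiv_mul volume hs
      (fun x hx => (hf' x hx).hasFDerivWithinAt) hf g

/-- translation-dilation change of variables for lintegrals -/
lemma lintegral_affine {x t : ℝ} (ht : 0 < t) {H : ℝ → ℝ≥0∞} (hH : Measurable H) :
    ∫⁻ y, H (x + t * y) = ENNReal.ofReal t⁻¹ * ∫⁻ z, H z := by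
  have h0 : (fun y : ℝ => x + t * y) = (fun z => x + z) ∘ (fun y => t * y) := rfl
  have h1 : Measure.map (fun y : ℝ => x + t * y) volume = ENNReal.ofReal t⁻¹ • volume := by
    rw [h0, ← Measure.map_map (measurable_const_add x) (measurable_const_mul t)]
    have h2 : Measure.map (fun y : ℝ => t * y) volume = ENNReal.ofReal |t⁻¹| • volume :=
      Real.map_volume_mul_left ht.ne'
    rw [h2, Measure.map_smul, MeasureTheory.map_add_left_eq_self volume x,
      abs_of_pos (inv_pos.mpr ht)]
  rw [← lintegral_map hH (by fun_prop), h1, lintegral_smul_measure, smul_eq_mul]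

/-- the gamma-type integral -/
lemma gamma_lintegral {t : ℝ} (ht : 0 < t) :
    ∫⁻ w in Ioi (0:ℝ), ENNReal.ofReal (w ^ ((1/2:ℝ) - 1) * Real.exp (-((2*t)⁻¹ * w)))
      = ENNReal.ofReal (Real.sqrt (2 * π * t)) := by
  have hint : IntegrableOn (fun w : ℝ => w ^ ((1/2:ℝ) - 1) * Real.exp (-((2*t)⁻¹ * w))) (Ioi 0) := by
    have h := integrableOn_rpow_mul_exp_neg_mul_rpow (p := 1) (s := (1/2:ℝ) - 1)
      (b := (2*t)⁻¹) (by norm_num) one_pos (by positivity)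
    simpa [Real.rpow_one] using h
  rw [← ofReal_integral_eq_lintegral_ofReal hint
      ((ae_restrict_iff' measurableSet_Ioi).mpr (ae_of_all _ fun w hw => by
        have hw' : (0:ℝ) < w := hw
        positivity))]
  congr 1
  rw [integral_rpow_mul_exp_neg_mul_Ioi (by norm_num : (0:ℝ) < 1/2) (by positivity : (0:ℝ) < (2*t)⁻¹)]
  rw [one_div, inv_inv, Real.Gamma_one_half_eq, ← Real.sqrt_eq_rpow,
    ← Real.sqrt_mul (by positivity)]
  congr 1
  ring

/-- the image of `(0,∞)` under the substitution map is `(0,u)` -/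
lemma image_phi {u : ℝ} (hu : 0 < u) :
    (fun w : ℝ => u - u * (u * w + 1)⁻¹) '' Ioi 0 = Ioo 0 u := by
  ext x
  constructor
  · rintro ⟨w, hw, rfl⟩
    have hw' : (0:ℝ) < w := hw
    have hq : (0:ℝ) < u * w + 1 := by positivity
    have h1 : u * (u * w + 1)⁻¹ < u := by
      rw [mul_inv_lt_iff₀ hq]
      nlinarith [mul_pos (mul_pos hu hu) hw']
    have h2 : 0 < u * (u * w + 1)⁻¹ := by positivity
    exact ⟨by linarith, by linarith⟩
  · rintro ⟨hx0, hxu⟩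
    have h0 : (0:ℝ) < u - x := sub_pos.mpr hxu
    have h1 : u - x ≠ 0 := h0.ne'
    refine ⟨x / (u * (u - x)), div_pos hx0 (mul_pos hu h0), ?_⟩
    have h2 : u * (x / (u * (u - x))) + 1 = u / (u - x) := by
      field_simp
      ring
    show u - u * (u * (x / (u * (u - x))) + 1)⁻¹ = x
    rw [h2]
    field_simp
    ring

/-- the key pointwise algebraic identity after the change of variables -/
lemma key_pointwise {t u w : ℝ} (ht : 0 < t) (hu : 0 < u) (hw : 0 < w) :
    |u^2 / (u * w + 1)^2| * (t⁻¹ *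
      ((if 0 < u - u * (u * w + 1)⁻¹ then
          Real.exp (-(u - u * (u * w + 1)⁻¹) / (2 * t)) /
            Real.sqrt (2 * π * t * (u - u * (u * w + 1)⁻¹)) else 0) *
        ρ (1/t) ((u - (u - u * (u * w + 1)⁻¹)) / t)))
    = Real.exp (-(u - 1) ^ 2 / (2 * t * u)) / (2 * π * t * Real.sqrt u) *
        (w ^ ((1/2:ℝ) - 1) * Real.exp (-((2*t)⁻¹ * w))) := by
  have hq : (0:ℝ) < u * w + 1 := by positivity
  have hX : u - u * (u * w + 1)⁻¹ = u^2 * w / (u * w + 1) := by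
    field_simp; ring
  have hX0 : 0 < u - u * (u * w + 1)⁻¹ := by rw [hX]; positivity
  have hV : (u - (u - u * (u * w + 1)⁻¹)) / t = u / (t * (u * w + 1)) := by
    field_simp
    ring
  have hV0 : (0:ℝ) < u / (t * (u * w + 1)) := by positivity
  rw [if_pos hX0, hV, ρ, if_pos hV0, hX]
  have hwr : w ^ ((1/2:ℝ) - 1) = (Real.sqrt w)⁻¹ := by
    rw [show ((1:ℝ)/2 - 1) = -(1/2) by norm_num, Real.rpow_neg hw.le, Real.sqrt_eq_rpow]
  rw [hwr]
  set s1 := Real.sqrt (2 * π * t * (u^2 * w / (u * w + 1))) with hs1def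
  set s2 := Real.sqrt (2 * π * (u / (t * (u * w + 1)))^3) with hs2def
  have hs1 : 0 < s1 := Real.sqrt_pos.mpr (by positivity)
  have hs2 : 0 < s2 := Real.sqrt_pos.mpr (by positivity)
  have hsu : 0 < Real.sqrt u := Real.sqrt_pos.mpr hu
  have hsw : 0 < Real.sqrt w := Real.sqrt_pos.mpr hw
  -- key product of square roots
  have key_s : s1 * s2 = (2 * π * u^2 / (t * (u * w + 1)^2)) * (Real.sqrt u * Real.sqrt w) := by
    rw [hs1def, hs2def, ← Real.sqrt_mul (by positivity)]
    rw [show (2 * π * t * (u^2 * w / (u * w + 1))) * (2 * π * (u / (t * (u * w + 1)))^3)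
        = (2 * π * u^2 / (t * (u * w + 1)^2))^2 * (u * w) by field_simp]
    rw [Real.sqrt_mul (by positivity), Real.sqrt_sq (by positivity),
      Real.sqrt_mul hu.le]
  -- combine exponentials
  have hab : -(u^2 * w / (u * w + 1)) / (2 * t) +
      -(u / (t * (u * w + 1)) - 1/t) ^ 2 / (2 * (u / (t * (u * w + 1))))
      = -(u - 1) ^ 2 / (2 * t * u) + -((2*t)⁻¹ * w) := by
    field_simp
    ring
  have lhs_eq : |u^2 / (u * w + 1)^2| * (t⁻¹ *
      ((Real.exp (-(u^2 * w / (u * w + 1)) / (2 * t)) / s1) *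
        (1/t * Real.exp (-(u / (t * (u * w + 1)) - 1/t) ^ 2 / (2 * (u / (t * (u * w + 1))))) / s2)))
      = (u^2 / (u * w + 1)^2 * t⁻¹ * (1/t) / (s1 * s2)) *
          Real.exp (-(u^2 * w / (u * w + 1)) / (2 * t) +
            -(u / (t * (u * w + 1)) - 1/t) ^ 2 / (2 * (u / (t * (u * w + 1))))) := by
    rw [Real.exp_add, abs_of_pos (show (0:ℝ) < u^2 / (u * w + 1)^2 by positivity)]
    field_simp
  rw [lhs_eq, hab, Real.exp_add]
  rw [key_s]
  field_simp

/-- the key integral identity: convolution density equals the target density -/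
lemma key_lintegral (t : ℝ) (ht : 0 < t) (u : ℝ) :
    ∫⁻ x, ENNReal.ofReal (t⁻¹ *
        ((if 0 < x then Real.exp (-x / (2 * t)) / Real.sqrt (2 * π * t * x) else 0) *
          ρ (1/t) ((u - x) / t)))
      = ENNReal.ofReal
          (if 0 < u then Real.exp (-(u - 1) ^ 2 / (2 * t * u)) / Real.sqrt (2 * π * t * u) else 0) := by
  by_cases hu : 0 < u
  · rw [if_pos hu]
    set F : ℝ → ℝ≥0∞ := fun x => ENNReal.ofReal (t⁻¹ *
        ((if 0 < x then Real.exp (-x / (2 * t)) / Real.sqrt (2 * π * t * x) else 0) *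
          ρ (1/t) ((u - x) / t))) with hF
    have hvanish : ∀ x : ℝ, x ∉ Ioo 0 u → F x = 0 := by
      intro x hx
      simp only [hF]
      by_cases hx0 : 0 < x
      · have hxu : u ≤ x := by
          by_contra h
          exact hx ⟨hx0, lt_of_not_ge h⟩
        have hn : ¬ (0 < (u - x) / t) := by
          rw [not_lt]
          exact div_nonpos_iff.mpr (Or.inr ⟨by linarith, ht.le⟩)
        simp only [ρ, if_neg hn]
        simp
      · simp only [if_neg hx0]
        simp
    have hphi_deriv : ∀ w ∈ Ioi (0:ℝ), HasDerivWithinAt (fun w : ℝ => u - u * (u * w + 1)⁻¹)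
        (u^2 / (u * w + 1)^2) (Ioi 0) w := by
      intro w hw
      have hw' : (0:ℝ) < w := hw
      have hq : (u * w + 1) ≠ 0 := by positivity
      have h1 : HasDerivAt (fun w : ℝ => u * w + 1) u w := by
        simpa using ((hasDerivAt_id w).const_mul u).add_const 1
      have h2 := (h1.inv hq).const_mul u
      have h3 := h2.const_sub u
      have : u - u * (-u / (u * w + 1) ^ 2) * 1 = u - u * (-u / (u * w + 1) ^ 2) := by ring
      refine (h3.hasDerivWithinAt (s := Ioi 0)).congr_deriv ?_
      ring
    have hphi_inj : Set.InjOn (fun w : ℝ => u - u * (u * w + 1)⁻¹) (Ioi 0) := by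
      intro a ha b hb h
      simp only at h
      have h1 : u * (u * a + 1)⁻¹ = u * (u * b + 1)⁻¹ := by linarith
      have h2 : (u * a + 1)⁻¹ = (u * b + 1)⁻¹ := mul_left_cancel₀ hu.ne' h1
      have ha' : (0:ℝ) < a := ha
      have hb' : (0:ℝ) < b := hb
      have h3 : u * a + 1 = u * b + 1 := by
        have := inv_inj.mp h2
        exact this
      have := mul_left_cancel₀ hu.ne' (by linarith : u * a = u * b)
      exact this
    calc ∫⁻ x, F x = ∫⁻ x in Ioo 0 u, F x := by
          rw [← lintegral_indicator measurableSet_Ioo]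
          refine lintegral_congr fun x => ?_
          by_cases hx : x ∈ Ioo 0 u
          · simp [hx]
          · simp [hx, hvanish x hx]
      _ = ∫⁻ x in (fun w : ℝ => u - u * (u * w + 1)⁻¹) '' Ioi 0, F x := by rw [image_phi hu]
      _ = ∫⁻ w in Ioi 0, ENNReal.ofReal |u^2 / (u * w + 1)^2| * F (u - u * (u * w + 1)⁻¹) :=
          _root_.lintegral_image_eq_lintegral_abs_deriv_mul measurableSet_Ioi hphi_deriv hphi_inj F
      _ = ∫⁻ w in Ioi 0, ENNReal.ofReal
            (Real.exp (-(u - 1) ^ 2 / (2 * t * u)) / (2 * π * t * Real.sqrt u) *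
              (w ^ ((1/2:ℝ) - 1) * Real.exp (-((2*t)⁻¹ * w)))) := by
          refine setLIntegral_congr_fun measurableSet_Ioi (fun w hw => ?_)
          have hw' : (0:ℝ) < w := hw
          rw [hF, ← ENNReal.ofReal_mul (abs_nonneg _), key_pointwise ht hu hw']
      _ = ENNReal.ofReal (Real.exp (-(u - 1) ^ 2 / (2 * t * u)) / (2 * π * t * Real.sqrt u)) *
            ∫⁻ w in Ioi 0, ENNReal.ofReal (w ^ ((1/2:ℝ) - 1) * Real.exp (-((2*t)⁻¹ * w))) := by
          simp_rw [ENNReal.ofReal_mul (show (0:ℝ) ≤ Real.exp (-(u - 1) ^ 2 / (2 * t * u)) / (2 * π * t * Real.sqrt u) by positivity)]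
          rw [lintegral_const_mul' _ _ ENNReal.ofReal_ne_top]
      _ = ENNReal.ofReal (Real.exp (-(u - 1) ^ 2 / (2 * t * u)) / Real.sqrt (2 * π * t * u)) := by
          rw [gamma_lintegral ht, ← ENNReal.ofReal_mul (by positivity)]
          congr 1
          have h1 : Real.sqrt (2 * π * t * u) = Real.sqrt (2 * π * t) * Real.sqrt u :=
            Real.sqrt_mul (by positivity) u
          have h2 : Real.sqrt (2 * π * t) ^ 2 = 2 * π * t := Real.sq_sqrt (by positivity)
          have h3 : 0 < Real.sqrt (2 * π * t) := Real.sqrt_pos.mpr (by positivity)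
          have h4 : 0 < Real.sqrt u := Real.sqrt_pos.mpr hu
          rw [h1, ← h2]
          rw [Real.sqrt_sq h3.le]
          field_simp
  · rw [if_neg hu]
    have hzero : ∀ x : ℝ, (t⁻¹ *
        ((if 0 < x then Real.exp (-x / (2 * t)) / Real.sqrt (2 * π * t * x) else 0) *
          ρ (1/t) ((u - x) / t))) = 0 := by
      intro x
      by_cases hx : 0 < x
      · have hn : ¬ (0 < (u - x) / t) := by
          rw [not_lt]
          exact div_nonpos_iff.mpr (Or.inr ⟨by linarith [not_lt.mp hu], ht.le⟩)
        rw [ρ, if_neg hn]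
        ring
      · rw [if_neg hx]
        ring
    simp only [hzero, ENNReal.ofReal_zero, lintegral_zero]

theorem stmt_19 (t : ℝ) (ht : 0 < t) :
    ν t = (γmeas t).conv (Measure.map (fun u => t * u) (μ (1 / t))) := by
  set gd : ℝ → ℝ≥0∞ := fun y => ENNReal.ofReal (ρ (1 / t) y) with hgd
  set fd : ℝ → ℝ≥0∞ := fun x =>
    ENNReal.ofReal (if 0 < x then Real.exp (-x / (2 * t)) / Real.sqrt (2 * π * t * x) else 0)
    with hfd
  have hgdm : Measurable gd := (measurable_rho _).ennreal_ofReal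
  have hfdm : Measurable fd := (measurable_fd t).ennreal_ofReal
  have hμ : μ (1 / t) = volume.withDensity gd := rfl
  have hγ : γmeas t = volume.withDensity fd := rfl
  haveI : SFinite (μ (1 / t)) := by rw [hμ]; infer_instance
  refine Measure.ext fun S hS => ?_
  have hmap : MeasurableSet ((fun p : ℝ × ℝ => p.1 + p.2) ⁻¹' S) := measurable_add hS
  have hindm : Measurable (S.indicator (1 : ℝ → ℝ≥0∞)) := measurable_one.indicator hS
  have hind_ne_top : ∀ z, S.indicator (1 : ℝ → ℝ≥0∞) z ≠ ⊤ := fun z => by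
    by_cases hz : z ∈ S <;> simp [Set.indicator_apply, hz]
  have main : (γmeas t).conv (Measure.map (fun u => t * u) (μ (1 / t))) S =
      ∫⁻ z in S,
        ENNReal.ofReal
          (if 0 < z then Real.exp (-(z - 1) ^ 2 / (2 * t * z)) / Real.sqrt (2 * π * t * z) else 0) := by
    calc (γmeas t).conv (Measure.map (fun u => t * u) (μ (1 / t))) S
        = ∫⁻ p : ℝ × ℝ, S.indicator (1 : ℝ → ℝ≥0∞) (p.1 + p.2)
            ∂((γmeas t).prod (Measure.map (fun u => t * u) (μ (1 / t)))) := by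
          rw [Measure.conv, Measure.map_apply measurable_add hS, ← lintegral_indicator_one hmap]
          exact lintegral_congr fun p => by
            by_cases hp : p.1 + p.2 ∈ S <;> simp [Set.indicator_apply, hp]
      _ = ∫⁻ x, ∫⁻ y, S.indicator (1 : ℝ → ℝ≥0∞) (x + y)
            ∂(Measure.map (fun u => t * u) (μ (1 / t))) ∂(γmeas t) :=
          lintegral_prod _ ((hindm.comp measurable_add).aemeasurable)
      _ = ∫⁻ x, ∫⁻ y, S.indicator (1 : ℝ → ℝ≥0∞) (x + t * y) ∂(μ (1 / t)) ∂(γmeas t) := by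
          refine lintegral_congr fun x => ?_
          exact lintegral_map (hindm.comp (measurable_const_add x)) (measurable_const_mul t)
      _ = ∫⁻ x, ∫⁻ y, gd y * S.indicator (1 : ℝ → ℝ≥0∞) (x + t * y) ∂volume ∂(γmeas t) := by
          refine lintegral_congr fun x => ?_
          rw [hμ]
          exact lintegral_withDensity_eq_lintegral_mul volume hgdm
            (hindm.comp ((measurable_id.const_mul t).const_add x))
      _ = ∫⁻ x, ENNReal.ofReal t⁻¹ *
            ∫⁻ z, gd ((z - x) / t) * S.indicator (1 : ℝ → ℝ≥0∞) z ∂volume ∂(γmeas t) := by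
          refine lintegral_congr fun x => ?_
          have hH : Measurable fun z => gd ((z - x) / t) * S.indicator (1 : ℝ → ℝ≥0∞) z :=
            (hgdm.comp ((measurable_id.sub_const x).div_const t)).mul hindm
          rw [← lintegral_affine ht hH]
          refine lintegral_congr fun y => ?_
          have hy : (x + t * y - x) / t = y := by field_simp; ring
          rw [hy]
      _ = ∫⁻ x, fd x * (ENNReal.ofReal t⁻¹ *
            ∫⁻ z, gd ((z - x) / t) * S.indicator (1 : ℝ → ℝ≥0∞) z ∂volume) ∂volume := by
          have hunc : Measurable fun p : ℝ × ℝ =>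
              gd ((p.2 - p.1) / t) * S.indicator (1 : ℝ → ℝ≥0∞) p.2 :=
            (hgdm.comp ((measurable_snd.sub measurable_fst).div_const t)).mul
              (hindm.comp measurable_snd)
          rw [hγ]
          exact lintegral_withDensity_eq_lintegral_mul volume hfdm
            ((hunc.lintegral_prod_right').const_mul _)
      _ = ∫⁻ x, ∫⁻ z, (ENNReal.ofReal t⁻¹ * (fd x * gd ((z - x) / t))) *
            S.indicator (1 : ℝ → ℝ≥0∞) z ∂volume ∂volume := by
          refine lintegral_congr fun x => ?_
          rw [← mul_assoc, ← lintegral_const_mul' _ _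
            (ENNReal.mul_ne_top ENNReal.ofReal_ne_top ENNReal.ofReal_ne_top)]
          refine lintegral_congr fun z => ?_
          ring
      _ = ∫⁻ z, ∫⁻ x, (ENNReal.ofReal t⁻¹ * (fd x * gd ((z - x) / t))) *
            S.indicator (1 : ℝ → ℝ≥0∞) z ∂volume ∂volume := by
          refine lintegral_lintegral_swap ?_
          refine Measurable.aemeasurable ?_
          exact ((measurable_const.mul ((hfdm.comp measurable_fst).mul
            (hgdm.comp ((measurable_snd.sub measurable_fst).div_const t)))).mul
            (hindm.comp measurable_snd))
      _ = ∫⁻ z, ENNReal.ofReal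
            (if 0 < z then Real.exp (-(z - 1) ^ 2 / (2 * t * z)) / Real.sqrt (2 * π * t * z) else 0) *
            S.indicator (1 : ℝ → ℝ≥0∞) z ∂volume := by
          refine lintegral_congr fun z => ?_
          rw [lintegral_mul_const' _ _ (hind_ne_top z)]
          congr 1
          calc ∫⁻ x, ENNReal.ofReal t⁻¹ * (fd x * gd ((z - x) / t)) ∂volume
              = ∫⁻ x, ENNReal.ofReal (t⁻¹ *
                  ((if 0 < x then Real.exp (-x / (2 * t)) / Real.sqrt (2 * π * t * x) else 0) *
                    ρ (1 / t) ((z - x) / t))) ∂volume := by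
                refine lintegral_congr fun x => ?_
                rw [hfd, hgd, ← ENNReal.ofReal_mul (fd_nonneg t x),
                  ← ENNReal.ofReal_mul (inv_nonneg.mpr ht.le)]
            _ = _ := key_lintegral t ht z
      _ = ∫⁻ z in S, ENNReal.ofReal
            (if 0 < z then Real.exp (-(z - 1) ^ 2 / (2 * t * z)) / Real.sqrt (2 * π * t * z) else 0)
            ∂volume := by
          rw [← lintegral_indicator hS]
          refine lintegral_congr fun z => ?_
          by_cases hz : z ∈ S <;> simp [Set.indicator_apply, hz]
  rw [ν, withDensity_apply _ hS, main]
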